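/- Let (L; π₁) and (L; π₂) be constrained literals over the same literal L, with π₁ = ⋀_{i∈I₁} ν_i and π₂ = ⋀_{i∈I₂} η_i in normal form, and let {σ_i | i ∈ I₂} be the induced substitutions of π₂. Then ⋃_{i∈I₂} Gnd(Lσ_i; π₁σ_i) = Gnd(L; π₁) \ Gnd(L; π₂). -/

import Mathlib

/-! Basic framework for the Bernays–Schönfinkel fragment: literals over a
signature with predicate symbols `P` (arities `ar`), variables `V` and a finite
domain of constants `D`; dismatching constraints with left-hand-side terms over
`V` and right-hand-side terms over fresh variables `W`. -/

/-- A first-order literal: polarity, predicate symbol and argument tuple of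
terms, each term being a variable (`Sum.inl`) or a constant (`Sum.inr`). -/
structure Lit (P : Type) (ar : P → ℕ) (V D : Type) where
  pol : Bool
  p : P
  args : Fin (ar p) → V ⊕ D

/-- Apply a substitution (mapping variables to terms) to a term. -/
def substT {V V' D : Type} (σ : V → V' ⊕ D) : V ⊕ D → V' ⊕ D :=
  Sum.elim σ Sum.inr

/-- Apply a substitution to a literal. -/
def Lit.subst {P : Type} {ar : P → ℕ} {V V' D : Type}
    (L : Lit P ar V D) (σ : V → V' ⊕ D) : Lit P ar V' D :=
  ⟨L.pol, L.p, fun j => substT σ (L.args j)⟩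

/-- The ground literal obtained from `L` by a grounding substitution `δ`. -/
def Lit.ground {P : Type} {ar : P → ℕ} {V D : Type}
    (L : Lit P ar V D) (δ : V → D) : Lit P ar Empty D :=
  L.subst (fun v => Sum.inr (δ v))

/-- The variables occurring in a literal. -/
def Lit.vars {P : Type} {ar : P → ℕ} {V D : Type} (L : Lit P ar V D) : Set V :=
  {v | ∃ j, L.args j = Sum.inl v}

/-- A dismatching constraint `⋀ᵢ s⃗ᵢ ≠ t⃗ᵢ`: a family of subconstraints indexed by
`ι`, each a pair of term tuples of the same dimension; left-hand sides over
variables `V`, right-hand sides over (fresh) variables `W`. -/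
structure DConstraint (V W D : Type) : Type 1 where
  ι : Type
  dim : ι → ℕ
  lhs : ∀ i, Fin (dim i) → V ⊕ D
  rhs : ∀ i, Fin (dim i) → W ⊕ D

/-- `δ` is a solution of `π` iff for each subconstraint `i`, the grounded
left-hand side `s⃗ᵢδ` is not an instance of the right-hand side `t⃗ᵢ`. -/
def DConstraint.Solution {V W D : Type} (π : DConstraint V W D) (δ : V → D) : Prop :=
  ∀ i, ¬ ∃ ξ : W → D, ∀ j, Sum.elim ξ id (π.rhs i j) = Sum.elim δ id (π.lhs i j)

/-- Apply a substitution to (the left-hand sides of) a constraint. -/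
def DConstraint.subst {V V' W D : Type} (π : DConstraint V W D) (σ : V → V' ⊕ D) :
    DConstraint V' W D :=
  ⟨π.ι, π.dim, fun i j => substT σ (π.lhs i j), π.rhs⟩

/-- Conjunction of two constraints (with variable-disjoint right-hand sides). -/
def DConstraint.and {V W₁ W₂ D : Type} (π₁ : DConstraint V W₁ D)
    (π₂ : DConstraint V W₂ D) : DConstraint V (W₁ ⊕ W₂) D where
  ι := π₁.ι ⊕ π₂.ι
  dim := Sum.elim π₁.dim π₂.dim
  lhs := fun i => match i with
    | .inl i => π₁.lhs i
    | .inr i => π₂.lhs i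
  rhs := fun i => match i with
    | .inl i => fun j => Sum.map Sum.inl id (π₁.rhs i j)
    | .inr i => fun j => Sum.map Sum.inr id (π₂.rhs i j)

/-- The left-hand-side variables of a constraint. -/
def DConstraint.LVar {V W D : Type} (π : DConstraint V W D) : Set V :=
  {v | ∃ i j, π.lhs i j = Sum.inl v}

/-- The set of ground literals covered by the constrained literal `(L; π)`. -/
def Gnd {P : Type} {ar : P → ℕ} {V W D : Type}
    (L : Lit P ar V D) (π : DConstraint V W D) : Set (Lit P ar Empty D) :=
  {g | ∃ δ : V → D, π.Solution δ ∧ g = L.ground δ}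

/-- Renaming of the variables `V` into the extended variable set `V ⊕ W₂`
(the right-hand-side variables of `π₂` become ordinary variables after applying
an induced substitution of `π₂`). -/
def embV {V W₂ D : Type} : V → (V ⊕ W₂) ⊕ D := fun v => Sum.inl (Sum.inl v)

/-- Difference: Let `(L; π₁)`, `(L; π₂)` be constrained literals over
the same literal `L` (finite domain `D`), with `π₂ = ⋀_{i∈I₂} x⃗ᵢ ≠ t⃗ᵢ` in normal
form (left-hand sides are tuples `x i` of distinct variables) and let `σ i` be the
induced substitution of the `i`-th subconstraint of `π₂` (mapping `x i j` to
`t⃗ᵢ`'s entries, identity elsewhere).  Then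
`⋃_{i∈I₂} Gnd(Lσᵢ; π₁σᵢ) = Gnd(L; π₁) \ Gnd(L; π₂)`. -/
private lemma substT_ground_eq {V' D : Type} (ρ : V' → D) (t : V' ⊕ D) :
    substT (fun v => (Sum.inr (ρ v) : Empty ⊕ D)) t = Sum.inr (Sum.elim ρ id t) := by
  cases t <;> rfl

private lemma key_term {V W₂ D : Type} (σi : (V ⊕ W₂) → (V ⊕ W₂) ⊕ D)
    (δ : V → D) (δ' : V ⊕ W₂ → D)
    (hkey : ∀ v, Sum.elim δ' id (σi (Sum.inl v)) = δ v) :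
    ∀ s : V ⊕ D, Sum.elim δ' id (substT σi (substT embV s)) = Sum.elim δ id s := by
  rintro (v | d)
  · exact hkey v
  · rfl

private lemma ground_eq' {P V W₂ D : Type} {ar : P → ℕ}
    (L : Lit P ar V D) (σi : (V ⊕ W₂) → (V ⊕ W₂) ⊕ D)
    (δ : V → D) (δ' : V ⊕ W₂ → D)
    (hkey : ∀ v, Sum.elim δ' id (σi (Sum.inl v)) = δ v) :
    ((L.subst embV).subst σi).ground δ' = L.ground δ := by
  have h : ∀ j, substT (fun u => (Sum.inr (δ' u) : Empty ⊕ D)) (substT σi (substT embV (L.args j)))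
      = substT (fun v => (Sum.inr (δ v) : Empty ⊕ D)) (L.args j) := by
    intro j
    rw [substT_ground_eq, substT_ground_eq, key_term σi δ δ' hkey]
  exact congrArg (Lit.mk L.pol L.p) (funext h)

private lemma sol_iff' {V W₁ W₂ D : Type}
    (π₁ : DConstraint V W₁ D) (σi : (V ⊕ W₂) → (V ⊕ W₂) ⊕ D)
    (δ : V → D) (δ' : V ⊕ W₂ → D)
    (hkey : ∀ v, Sum.elim δ' id (σi (Sum.inl v)) = δ v) :
    ((π₁.subst embV).subst σi).Solution δ' ↔ π₁.Solution δ := by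
  have h : ∀ k j, Sum.elim δ' id (((π₁.subst embV).subst σi).lhs k j)
      = Sum.elim δ id (π₁.lhs k j) := fun k j => key_term σi δ δ' hkey _
  constructor
  · intro hs k hex
    obtain ⟨ξ, hξ⟩ := hex
    exact hs k ⟨ξ, fun j => (hξ j).trans (h k j).symm⟩
  · intro hs k hex
    obtain ⟨ξ, hξ⟩ := hex
    exact hs k ⟨ξ, fun j => (hξ j).trans (h k j)⟩

theorem stmt2 {P V W₁ W₂ D : Type} {ar : P → ℕ} [Fintype D] [Nonempty D]
    (L : Lit P ar V D)
    (π₁ : DConstraint V W₁ D) (π₂ : DConstraint V W₂ D)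
    (h₁ : π₁.LVar ⊆ L.vars) (h₂ : π₂.LVar ⊆ L.vars)
    (x : ∀ i : π₂.ι, Fin (π₂.dim i) → V)
    (hx : ∀ i j, π₂.lhs i j = Sum.inl (x i j))
    (hinj : ∀ i, Function.Injective (x i))
    (σ : π₂.ι → (V ⊕ W₂) → (V ⊕ W₂) ⊕ D)
    (hσ1 : ∀ i j, σ i (Sum.inl (x i j)) = Sum.map Sum.inr id (π₂.rhs i j))
    (hσ2 : ∀ i u, (∀ j, Sum.inl (x i j) ≠ u) → σ i u = Sum.inl u) :
    (⋃ i : π₂.ι, Gnd ((L.subst embV).subst (σ i)) ((π₁.subst embV).subst (σ i)))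
      = Gnd L π₁ \ Gnd L π₂ := by
  classical
  ext g
  simp only [Set.mem_iUnion, Set.mem_diff, Gnd, Set.mem_setOf_eq]
  constructor
  · rintro ⟨i, δ', hsol, rfl⟩
    set δ : V → D := fun v => Sum.elim δ' id (σ i (Sum.inl v)) with hδdef
    have hkey : ∀ v, Sum.elim δ' id (σ i (Sum.inl v)) = δ v := fun _ => rfl
    have hgnd := ground_eq' L (σ i) δ δ' hkey
    have hsol₁ : π₁.Solution δ := (sol_iff' π₁ (σ i) δ δ' hkey).1 hsol
    refine ⟨⟨δ, hsol₁, hgnd⟩, ?_⟩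
    rintro ⟨δ₂, hsol₂, hg2⟩
    have hgeq : L.ground δ = L.ground δ₂ := hgnd.symm.trans hg2
    have hagree : ∀ v ∈ L.vars, δ v = δ₂ v := by
      rintro v ⟨j, hj⟩
      simp only [Lit.ground, Lit.subst] at hgeq
      injection hgeq with _ h2' h3
      have h1 := congrFun h3 j
      rw [hj] at h1
      exact Sum.inr.inj h1
    refine hsol₂ i ⟨fun w => δ' (Sum.inr w), fun j => ?_⟩
    rw [hx i j]
    show Sum.elim (fun w => δ' (Sum.inr w)) id (π₂.rhs i j) = δ₂ (x i j)
    rw [← hagree _ (h₂ ⟨i, j, hx i j⟩)]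
    show _ = Sum.elim δ' id (σ i (Sum.inl (x i j)))
    rw [hσ1 i j]
    rcases π₂.rhs i j with w | d <;> rfl
  · rintro ⟨⟨δ, hsol₁, rfl⟩, hnot⟩
    have hns : ¬ π₂.Solution δ := fun h => hnot ⟨δ, h, rfl⟩
    rw [DConstraint.Solution] at hns
    push_neg at hns
    obtain ⟨i, ξ, hξ⟩ := hns
    set δ' : V ⊕ W₂ → D := Sum.elim δ ξ with hδ'def
    have hkey : ∀ v, Sum.elim δ' id (σ i (Sum.inl v)) = δ v := by
      intro v
      by_cases hc : ∃ j, x i j = v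
      · obtain ⟨j, rfl⟩ := hc
        rw [hσ1 i j]
        have h1 := hξ j
        rw [hx i j] at h1
        rcases hr : π₂.rhs i j with w | d <;> rw [hr] at h1 <;> simpa [hδ'def] using h1
      · push_neg at hc
        rw [hσ2 i (Sum.inl v) (fun j h => hc j (Sum.inl.inj h))]
        rfl
    exact ⟨i, δ', (sol_iff' π₁ (σ i) δ δ' hkey).2 hsol₁,
      (ground_eq' L (σ i) δ δ' hkey).symm⟩
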